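/- If lim_{n→∞} β_n^{1/n} = r > 0 and R > r, then the power series f(z) = Σ_{n≥1} z^n/(n β_n) belongs to H_β but has radius of convergence exactly r, hence does not extend analytically to the disk of radius R. -/

import Mathlib

open Filter

theorem stmt_4 (β : ℕ → ℝ) (r R : ℝ) (hβ : ∀ n, 0 < β n) (hr : 0 < r) (hR : r < R)
    (hlim : Tendsto (fun n : ℕ => β n ^ ((1 : ℝ) / n)) atTop (nhds r))
    (a : ℕ → ℂ) (ha : ∀ n : ℕ, a n = if n = 0 then 0 else 1 / ((n : ℂ) * (β n : ℂ))) :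
    (Summable fun n => ‖a n‖ ^ 2 * β n ^ 2) ∧
    (∀ z : ℂ, ‖z‖ < r → Summable fun n => a n * z ^ n) ∧
    (∀ z : ℂ, r < ‖z‖ → ¬ Summable fun n => a n * z ^ n) ∧
    (∃ z : ℂ, ‖z‖ < R ∧ ¬ Summable fun n => a n * z ^ n) := by
  have hnorm : ∀ n : ℕ, n ≠ 0 → ‖a n‖ = 1 / (n * β n) := by
    intro n hn
    rw [ha n, if_neg hn, norm_div, norm_one, norm_mul]
    simp [Complex.norm_natCast, Complex.norm_real, abs_of_pos (hβ n)]
  have hrpow : ∀ n : ℕ, n ≠ 0 → (β n ^ ((1 : ℝ) / n)) ^ n = β n := by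
    intro n hn
    rw [← Real.rpow_natCast (β n ^ ((1 : ℝ) / n)) n, ← Real.rpow_mul (hβ n).le,
      one_div, inv_mul_cancel₀ (by exact_mod_cast hn), Real.rpow_one]
  -- Divergence part (used twice)
  have hdiv : ∀ z : ℂ, r < ‖z‖ → ¬ Summable fun n => a n * z ^ n := by
    intro z hz hsum
    obtain ⟨s, hs0, hrs, hsz⟩ : ∃ s : ℝ, 0 < s ∧ r < s ∧ s < ‖z‖ :=
      ⟨(r + ‖z‖) / 2, by linarith, by linarith, by linarith⟩
    obtain ⟨c, hc, hc1⟩ : ∃ c : ℝ, c = ‖z‖ / s ∧ 1 < c :=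
      ⟨‖z‖ / s, rfl, (one_lt_div hs0).2 hsz⟩
    have hev : ∀ᶠ n : ℕ in atTop, β n ^ ((1 : ℝ) / n) < s :=
      hlim.eventually (eventually_lt_nhds hrs)
    have htend : Tendsto (fun n => ‖a n * z ^ n‖) atTop (nhds 0) := by
      simpa using (hsum.tendsto_atTop_zero.norm)
    have hsmall : ∀ᶠ n : ℕ in atTop, ‖a n * z ^ n‖ < c - 1 := by
      have h0 : (0:ℝ) < c - 1 := by linarith
      exact htend.eventually (eventually_lt_nhds (by simpa using h0))
    have hbig : ∀ᶠ n : ℕ in atTop, c - 1 ≤ ‖a n * z ^ n‖ := by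
      filter_upwards [hev, eventually_ge_atTop 1] with n hn hn1
      have hn0 : n ≠ 0 := by omega
      have hβs : β n < s ^ n := by
        calc β n = (β n ^ ((1 : ℝ) / n)) ^ n := (hrpow n hn0).symm
        _ < s ^ n := pow_lt_pow_left₀ hn (Real.rpow_nonneg (hβ n).le _) hn0
      have hnpos : (0:ℝ) < n := by exact_mod_cast Nat.pos_of_ne_zero hn0
      have hterm : ‖a n * z ^ n‖ = ‖z‖ ^ n / (n * β n) := by
        rw [norm_mul, norm_pow, hnorm n hn0]; ring
      rw [hterm]
      have h1 : ‖z‖ ^ n / (n * s ^ n) ≤ ‖z‖ ^ n / (n * β n) := by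
        apply div_le_div_of_nonneg_left (by positivity)
          (mul_pos hnpos (hβ n))
        exact mul_le_mul_of_nonneg_left hβs.le hnpos.le
      have h2 : ‖z‖ ^ n / (n * s ^ n) = c ^ n / n := by
        rw [hc, div_pow, div_div, mul_comm (s ^ n) ((n:ℝ))]
      have h3 : c - 1 ≤ c ^ n / n := by
        rw [le_div_iff₀ hnpos]
        have hb := one_add_mul_le_pow (a := c - 1) (by linarith) n
        have h4 : (c - 1) * n ≤ 1 + n * (c - 1) := by nlinarith
        calc (c - 1) * n ≤ 1 + n * (c - 1) := h4
        _ ≤ (1 + (c - 1)) ^ n := hb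
        _ = c ^ n := by ring_nf
      linarith [h2 ▸ h3]
    obtain ⟨n, h1, h2⟩ := (hsmall.and hbig).exists
    linarith
  refine ⟨?_, ?_, hdiv, ?_⟩
  · have heq : ∀ n : ℕ, ‖a n‖ ^ 2 * β n ^ 2 = 1 / (n : ℝ) ^ 2 := by
      intro n
      rcases eq_or_ne n 0 with h | h
      · subst h; simp [ha 0]
      · rw [hnorm n h]
        have hn : ((n:ℝ)) ≠ 0 := by exact_mod_cast h
        have hb : β n ≠ 0 := (hβ n).ne'
        field_simp
    rw [show (fun n => ‖a n‖ ^ 2 * β n ^ 2) = fun n : ℕ => 1 / (n : ℝ) ^ 2 from funext heq]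
    exact_mod_cast Real.summable_one_div_nat_pow.2 one_lt_two
  · intro z hz
    set s : ℝ := (‖z‖ + r) / 2 with hs
    have hz0 : 0 ≤ ‖z‖ := norm_nonneg z
    have hs0 : 0 < s := by positivity
    have hzs : ‖z‖ < s := by rw [hs]; linarith
    have hsr : s < r := by rw [hs]; linarith
    have hev : ∀ᶠ n : ℕ in atTop, s < β n ^ ((1 : ℝ) / n) :=
      hlim.eventually (eventually_gt_nhds hsr)
    apply Summable.of_norm_bounded_eventually_nat (g := fun n => (‖z‖ / s) ^ n)
    · exact summable_geometric_of_lt_one (by positivity) ((div_lt_one hs0).2 hzs)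
    · filter_upwards [hev, eventually_ge_atTop 1] with n hn hn1
      have hn0 : n ≠ 0 := by omega
      have hβs : s ^ n < β n := by
        calc s ^ n < (β n ^ ((1 : ℝ) / n)) ^ n := by
              exact pow_lt_pow_left₀ hn hs0.le hn0
        _ = β n := hrpow n hn0
      have hn1' : (1:ℝ) ≤ n := by exact_mod_cast hn1
      have hterm : ‖a n * z ^ n‖ = ‖z‖ ^ n / (n * β n) := by
        rw [norm_mul, norm_pow, hnorm n hn0]; ring
      rw [hterm, div_pow]
      apply div_le_div_of_nonneg_left (by positivity) (by positivity)
      calc s ^ n = 1 * s ^ n := (one_mul _).symm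
      _ ≤ n * β n := by
          apply mul_le_mul hn1' hβs.le (by positivity) (by linarith)
  · refine ⟨(((r + R) / 2 : ℝ) : ℂ), ?_, hdiv _ ?_⟩
    · rw [Complex.norm_real, Real.norm_eq_abs, abs_of_pos (by linarith)]; linarith
    · rw [Complex.norm_real, Real.norm_eq_abs, abs_of_pos (by linarith)]; linarith
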